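/- arXiv:1806.03696 — 3 statements merged into one kernel-verified Lean document; each statement's English description precedes it below -/
import Mathlib

section
/- Almost-everywhere finiteness of curve intersections (consequence of the two-noodle formula, used in the proofs of Lemma 3.1 and Theorem 3.2): Let γ and γ' be rectifiable curves in ℝ². Then for Lebesgue-almost every pair (x, θ) ∈ ℝ² × (−π,π], the intersection γ ∩ (ρ_θ(γ') + x) is a finite set. -/
open MeasureTheory Set

open scoped NNReal ENNReal

noncomputable section

/-- A set `γ ⊆ ℝ²` (modelled as `ℂ`) is a rectifiable curve if it is the image of
a continuous injective map `Γ : [0,1] → ℝ²` and has finite 1-dimensional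
Hausdorff measure. -/
def IsRectifiableCurve (γ : Set ℂ) : Prop :=
  ∃ Γ : ℝ → ℂ, ContinuousOn Γ (Set.Icc 0 1) ∧ Set.InjOn Γ (Set.Icc 0 1) ∧
    Γ '' Set.Icc 0 1 = γ ∧ μH[1] γ < ⊤

lemma edist_le_h1 {s : Set ℂ} (hs : IsPreconnected s) {a b : ℂ}
    (ha : a ∈ s) (hb : b ∈ s) : edist a b ≤ μH[1] s := by
  rcases eq_or_ne a b with rfl | hab
  · simp
  set r : ℝ := ‖b - a‖ with hr
  have hr0 : 0 < r := by
    simpa [hr] using (norm_pos_iff.mpr (sub_ne_zero.mpr (Ne.symm hab)))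
  set u : ℂ := (b - a) / r with hu
  have hunorm : ‖u‖ = 1 := by
    rw [hu, norm_div, Complex.norm_real, Real.norm_eq_abs, abs_of_pos hr0, ← hr,
      div_self (ne_of_gt hr0)]
  set F : ℂ → ℝ := fun z => ((starRingEnd ℂ) u * z).re with hF
  have hlip : LipschitzWith 1 F := by
    refine LipschitzWith.of_dist_le_mul fun x y => ?_
    have h1 : F x - F y = ((starRingEnd ℂ) u * (x - y)).re := by
      simp [hF, mul_sub]
    rw [Real.dist_eq, h1]
    calc |((starRingEnd ℂ) u * (x - y)).re| ≤ ‖(starRingEnd ℂ) u * (x - y)‖ :=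
          Complex.abs_re_le_norm _
      _ = ‖x - y‖ := by simp [map_mul, hunorm]
      _ = 1 * dist x y := by simp [Complex.dist_eq]
  have himage : Icc (F a) (F b) ⊆ F '' s := by
    have hpc : IsPreconnected (F '' s) := hs.image F hlip.continuous.continuousOn
    have := hpc.ordConnected
    exact this.out (mem_image_of_mem F ha) (mem_image_of_mem F hb)
  have hFb : F b - F a = r := by
    have h1 : F b - F a = ((starRingEnd ℂ) u * (b - a)).re := by simp [hF, mul_sub]
    have h2 : (starRingEnd ℂ) u * (b - a) = (r : ℂ) := by
      rw [hu, map_div₀]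
      rw [div_mul_eq_mul_div, mul_comm, Complex.mul_conj]
      rw [Complex.normSq_eq_norm_sq]
      simp only [Complex.conj_ofReal, ← hr]
      rw [sq, Complex.ofReal_mul, mul_div_assoc,
        div_self (by exact_mod_cast ne_of_gt hr0), mul_one]
    rw [h1, h2, Complex.ofReal_re]
  calc edist a b = ENNReal.ofReal r := by
        rw [edist_dist, Complex.dist_eq, ← norm_neg]; norm_num [hr]
    _ = volume (Icc (F a) (F b)) := by rw [Real.volume_Icc, hFb]
    _ = μH[1] (Icc (F a) (F b)) := by rw [MeasureTheory.hausdorffMeasure_real]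
    _ ≤ μH[1] (F '' s) := measure_mono himage
    _ ≤ ((1:ℝ≥0) : ℝ≥0∞) ^ (1:ℝ) * μH[1] s := hlip.hausdorffMeasure_image_le zero_le_one s
    _ = μH[1] s := by simp

lemma evar_le_h1 {Γ : ℝ → ℂ} (hc : ContinuousOn Γ (Icc 0 1))
    (hi : InjOn Γ (Icc 0 1)) :
    eVariationOn Γ (Icc 0 1) ≤ μH[1] (Γ '' Icc 0 1) := by
  haveI : NoAtoms (μH[1] : Measure ℂ) := MeasureTheory.Measure.noAtoms_hausdorff ℂ one_pos
  refine iSup_le ?_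
  rintro ⟨n, u, hu, us⟩
  dsimp only
  set A : ℕ → Set ℂ := fun i => Γ '' Ioc (u i) (u (i + 1)) with hA
  have hsub : ∀ i, Icc (u i) (u (i + 1)) ⊆ Icc (0:ℝ) 1 := fun i =>
    Icc_subset_Icc (us i).1 (us (i + 1)).2
  have hAeq : ∀ i, A i = Γ '' Icc (u i) (u (i + 1)) \ {Γ (u i)} := by
    intro i
    ext y
    constructor
    · rintro ⟨t, ht, rfl⟩
      refine ⟨⟨t, Ioc_subset_Icc_self ht, rfl⟩, ?_⟩
      simp only [mem_singleton_iff]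
      intro h
      have := hi (hsub i (Ioc_subset_Icc_self ht)) (us i) h
      exact (ne_of_gt ht.1) this
    · rintro ⟨⟨t, ht, rfl⟩, hy⟩
      refine ⟨t, ⟨lt_of_le_of_ne ht.1 ?_, ht.2⟩, rfl⟩
      intro h
      exact hy (by rw [← h]; rfl)
  have hAmeas : ∀ i, MeasurableSet (A i) := by
    intro i
    rw [hAeq i]
    exact ((isCompact_Icc.image_of_continuousOn (hc.mono (hsub i))).measurableSet).diff
      (measurableSet_singleton _)
  have hdisj : (↑(Finset.range n) : Set ℕ).PairwiseDisjoint A := by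
    intro i hi' j hj' hij
    wlog hlt : i < j generalizing i j
    · exact (this hj' hi' hij.symm
        (lt_of_le_of_ne (not_lt.mp hlt) hij.symm)).symm
    refine Set.disjoint_left.mpr ?_
    rintro y ⟨t, ht, rfl⟩ ⟨t', ht', hy⟩
    have htt : t = t' := hi (hsub i (Ioc_subset_Icc_self ht))
      (hsub j (Ioc_subset_Icc_self ht')) hy.symm
    have : t ≤ u j := ht.2.trans (hu (by omega))
    exact absurd (htt ▸ ht'.1) (not_lt.mpr this)
  calc ∑ i ∈ Finset.range n, edist (Γ (u (i + 1))) (Γ (u i))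
      ≤ ∑ i ∈ Finset.range n, μH[1] (A i) := by
        refine Finset.sum_le_sum fun i _ => ?_
        have hico : u i ≤ u (i + 1) := hu (Nat.le_succ i)
        have h1 : edist (Γ (u (i + 1))) (Γ (u i)) ≤ μH[1] (Γ '' Icc (u i) (u (i + 1))) := by
          refine edist_le_h1 (isPreconnected_Icc.image Γ (hc.mono (hsub i))) ?_ ?_
          · exact mem_image_of_mem Γ (right_mem_Icc.mpr hico)
          · exact mem_image_of_mem Γ (left_mem_Icc.mpr hico)
        refine h1.trans ?_
        have h2 : Γ '' Icc (u i) (u (i + 1)) ⊆ A i ∪ {Γ (u i)} := by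
          rintro y ⟨t, ht, rfl⟩
          rcases eq_or_lt_of_le ht.1 with rfl | hlt
          · exact Or.inr rfl
          · exact Or.inl ⟨t, ⟨hlt, ht.2⟩, rfl⟩
        calc μH[1] (Γ '' Icc (u i) (u (i + 1))) ≤ μH[1] (A i ∪ {Γ (u i)}) := measure_mono h2
          _ ≤ μH[1] (A i) + μH[1] {Γ (u i)} := measure_union_le _ _
          _ = μH[1] (A i) := by rw [NullSingletonClass.measure_singleton (self := this), add_zero]
    _ = μH[1] (⋃ i ∈ Finset.range n, A i) :=
        (measure_biUnion_finset hdisj fun i _ => hAmeas i).symm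
    _ ≤ μH[1] (Γ '' Icc 0 1) := by
        refine measure_mono ?_
        refine iUnion₂_subset fun i _ => ?_
        exact image_mono ((Ioc_subset_Icc_self).trans (hsub i))

lemma cell_mem {a : ℝ} (ha : a ∈ Set.Icc (0:ℝ) 1) (k : ℕ) :
    a ∈ Set.Icc (((min ⌊a * ((k:ℝ)+1)⌋₊ k : ℕ) : ℝ)/((k:ℝ)+1))
      ((((min ⌊a * ((k:ℝ)+1)⌋₊ k : ℕ) : ℝ) + 1)/((k:ℝ)+1)) := by
  have hN : (0:ℝ) < (k:ℝ) + 1 := by positivity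
  have h0 : 0 ≤ a * ((k:ℝ)+1) := mul_nonneg ha.1 hN.le
  constructor
  · rw [div_le_iff₀ hN]
    calc ((min ⌊a * ((k:ℝ)+1)⌋₊ k : ℕ) : ℝ) ≤ (⌊a * ((k:ℝ)+1)⌋₊ : ℝ) := by
          exact_mod_cast min_le_left _ _
      _ ≤ a * ((k:ℝ)+1) := Nat.floor_le h0
  · rcases le_or_gt (⌊a * ((k:ℝ)+1)⌋₊) k with hle | hlt
    · rw [le_div_iff₀ hN, min_eq_left hle]
      exact (Nat.lt_floor_add_one (a * ((k:ℝ)+1))).le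
    · rw [le_div_iff₀ hN, min_eq_right hlt.le]
      have : a * ((k:ℝ)+1) ≤ (k:ℝ) + 1 := by nlinarith [ha.2]
      linarith
lemma cell_sep {a b : ℝ} (ha : a ∈ Set.Icc (0:ℝ) 1) (hb : b ∈ Set.Icc (0:ℝ) 1) {k : ℕ}
    (h : min ⌊a * ((k:ℝ)+1)⌋₊ k = min ⌊b * ((k:ℝ)+1)⌋₊ k) :
    |a - b| ≤ 1/((k:ℝ)+1) := by
  have hN : (0:ℝ) < (k:ℝ) + 1 := by positivity
  have h1 := cell_mem ha k
  have h2 := cell_mem hb k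
  rw [h] at h1
  rw [abs_sub_le_iff]
  constructor
  · have := h1.2; have := h2.1
    have heq : (((min ⌊b * ((k:ℝ)+1)⌋₊ k : ℕ) : ℝ) + 1)/((k:ℝ)+1)
        - ((min ⌊b * ((k:ℝ)+1)⌋₊ k : ℕ) : ℝ)/((k:ℝ)+1) = 1/((k:ℝ)+1) := by ring
    linarith
  · have := h1.1; have := h2.2
    have heq : (((min ⌊b * ((k:ℝ)+1)⌋₊ k : ℕ) : ℝ) + 1)/((k:ℝ)+1)
        - ((min ⌊b * ((k:ℝ)+1)⌋₊ k : ℕ) : ℝ)/((k:ℝ)+1) = 1/((k:ℝ)+1) := by ring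
    linarith

lemma exists_lipschitz_cover {γ : Set ℂ} (h : IsRectifiableCurve γ) :
    ∃ (f : ℝ → ℂ) (K : ℝ≥0), LipschitzWith K f ∧ γ ⊆ f '' Icc 0 1 := by
  obtain ⟨Γ, hc, hi, himg, hfin⟩ := h
  set s : Set ℝ := Icc 0 1 with hs
  have h0s : (0:ℝ) ∈ s := left_mem_Icc.mpr zero_le_one
  have hfin' : eVariationOn Γ s < ⊤ :=
    lt_of_le_of_lt (evar_le_h1 hc hi) (himg ▸ hfin)
  have hBV : BoundedVariationOn Γ s := ne_of_lt hfin'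
  have hLBV : LocallyBoundedVariationOn Γ s := hBV.locallyBoundedVariationOn
  set v : ℝ → ℝ := variationOnFromTo Γ s 0 with hv
  have hmono : MonotoneOn v s := variationOnFromTo.monotoneOn hLBV h0s
  have hdist : ∀ a ∈ s, ∀ b ∈ s, a ≤ b → dist (Γ b) (Γ a) ≤ v b - v a := by
    intro a ha b hb hab
    have hadd := variationOnFromTo.add hLBV h0s ha hb
    have heq : v b - v a = variationOnFromTo Γ s a b := by
      rw [hv]; linarith [hadd]
    rw [heq, variationOnFromTo.eq_of_le Γ s hab]
    exact (hBV.mono inter_subset_left).dist_le ⟨hb, hab, le_rfl⟩ ⟨ha, le_rfl, hab⟩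
  have hdist' : ∀ a ∈ s, ∀ b ∈ s, dist (Γ a) (Γ b) ≤ |v a - v b| := by
    intro a ha b hb
    rcases le_total a b with hab | hab
    · rw [dist_comm, abs_sub_comm]
      exact (hdist a ha b hb hab).trans (le_abs_self _)
    · exact (hdist b hb a ha hab).trans (le_abs_self _)
  set T : Set ℝ := v '' s with hT
  set g : ℝ → ℂ := fun u => Γ (Function.invFunOn v s u) with hg
  have hginv : ∀ u ∈ T, Function.invFunOn v s u ∈ s ∧ v (Function.invFunOn v s u) = u := by
    rintro u ⟨b, hb, rfl⟩
    exact ⟨Function.invFunOn_mem ⟨b, hb, rfl⟩, Function.invFunOn_eq ⟨b, hb, rfl⟩⟩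
  have hglip : LipschitzOnWith 1 g T := by
    refine LipschitzOnWith.of_dist_le_mul fun u hu u' hu' => ?_
    obtain ⟨hc1, hv1⟩ := hginv u hu
    obtain ⟨hc2, hv2⟩ := hginv u' hu'
    calc dist (g u) (g u') ≤ |v (Function.invFunOn v s u) - v (Function.invFunOn v s u')| :=
          hdist' _ hc1 _ hc2
      _ = dist u u' := by rw [hv1, hv2, Real.dist_eq]
      _ = 1 * dist u u' := (one_mul _).symm
  have hcover : γ ⊆ g '' T := by
    intro y hy
    rw [← himg] at hy
    obtain ⟨b, hb, rfl⟩ := hy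
    refine ⟨v b, ⟨b, hb, rfl⟩, ?_⟩
    obtain ⟨hc1, hv1⟩ := hginv (v b) ⟨b, hb, rfl⟩
    have := hdist' _ hc1 b hb
    rw [hv1, sub_self, abs_zero] at this
    exact dist_le_zero.mp this
  -- extend real and imaginary parts
  have hre : LipschitzOnWith 1 (fun u => (g u).re) T := by
    refine LipschitzOnWith.of_dist_le_mul fun u hu u' hu' => ?_
    calc dist (g u).re (g u').re ≤ dist (g u) (g u') := by
          rw [Real.dist_eq, Complex.dist_eq]
          exact (Complex.abs_re_le_norm _).trans_eq' (by simp [Complex.sub_re])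
      _ ≤ 1 * dist u u' := hglip.dist_le_mul u hu u' hu'
  have him : LipschitzOnWith 1 (fun u => (g u).im) T := by
    refine LipschitzOnWith.of_dist_le_mul fun u hu u' hu' => ?_
    calc dist (g u).im (g u').im ≤ dist (g u) (g u') := by
          rw [Real.dist_eq, Complex.dist_eq]
          exact (Complex.abs_im_le_norm _).trans_eq' (by simp [Complex.sub_im])
      _ ≤ 1 * dist u u' := hglip.dist_le_mul u hu u' hu'
  obtain ⟨G1, hG1lip, hG1eq⟩ := hre.extend_real
  obtain ⟨G2, hG2lip, hG2eq⟩ := him.extend_real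
  set f0 : ℝ → ℂ := fun u => (G1 u : ℂ) + (G2 u : ℂ) * Complex.I with hf0
  have hf0lip : LipschitzWith 2 f0 := by
    refine LipschitzWith.of_dist_le_mul fun u u' => ?_
    have h1 : f0 u - f0 u' = ((G1 u - G1 u' : ℝ) : ℂ) + ((G2 u - G2 u' : ℝ) : ℂ) * Complex.I := by
      rw [hf0]; push_cast; ring
    rw [Complex.dist_eq, h1]
    calc ‖((G1 u - G1 u' : ℝ) : ℂ) + ((G2 u - G2 u' : ℝ) : ℂ) * Complex.I‖
        ≤ |G1 u - G1 u'| + |G2 u - G2 u'| := by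
          refine (Complex.norm_le_abs_re_add_abs_im _).trans_eq ?_
          simp [Complex.add_re, Complex.add_im]
      _ ≤ 1 * dist u u' + 1 * dist u u' := by
          refine add_le_add ?_ ?_
          · simpa [Real.dist_eq] using hG1lip.dist_le_mul u u'
          · simpa [Real.dist_eq] using hG2lip.dist_le_mul u u'
      _ = 2 * dist u u' := by push_cast; ring
  have hf0eq : ∀ u ∈ T, f0 u = g u := by
    intro u hu
    rw [hf0]
    simp only
    rw [← hG1eq hu, ← hG2eq hu]
    exact Complex.re_add_im (g u)
  have hcover0 : γ ⊆ f0 '' T := by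
    intro y hy
    obtain ⟨u, hu, rfl⟩ := hcover hy
    exact ⟨u, hu, hf0eq u hu⟩
  -- bound T
  set V : ℝ := max (eVariationOn Γ s).toReal 1 with hV
  have hV1 : (1:ℝ) ≤ V := le_max_right _ _
  have hV0 : (0:ℝ) < V := lt_of_lt_of_le one_pos hV1
  have hTsub : T ⊆ Icc 0 V := by
    rintro u ⟨b, hb, rfl⟩
    constructor
    · exact variationOnFromTo.nonneg_of_le Γ s hb.1
    · rw [hv, variationOnFromTo.eq_of_le Γ s hb.1]
      refine le_trans ?_ (le_max_left _ _)
      exact ENNReal.toReal_mono hBV (eVariationOn.mono Γ inter_subset_left)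
  refine ⟨fun t => f0 (t * V), 2 * V.toNNReal, ?_, ?_⟩
  · have hmul : LipschitzWith V.toNNReal (fun t : ℝ => t * V) := by
      refine LipschitzWith.of_dist_le_mul fun t t' => ?_
      rw [Real.dist_eq, Real.dist_eq, ← sub_mul, abs_mul, abs_of_pos hV0, mul_comm]
      exact le_of_eq (by rw [Real.coe_toNNReal _ hV0.le])
    exact hf0lip.comp hmul
  · intro y hy
    obtain ⟨u, hu, rfl⟩ := hcover0 hy
    have huV := hTsub hu
    refine ⟨u / V, ⟨div_nonneg huV.1 hV0.le, (div_le_one hV0).mpr huV.2⟩, ?_⟩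
    show f0 (u / V * V) = f0 u
    rw [div_mul_cancel₀ _ (ne_of_gt hV0)]

lemma main_aux {f f' : ℝ → ℂ} {K K' : ℝ≥0} (hf : LipschitzWith K f)
    (hf' : LipschitzWith K' f') :
    ∀ᵐ p : ℂ × ℝ
        ∂((volume : Measure ℂ).prod
            ((volume : Measure ℝ).restrict (Set.Ioc (-Real.pi) Real.pi))),
      ((f '' Icc 0 1) ∩
        ((fun a : ℂ => Complex.exp (p.2 * Complex.I) * a + p.1) '' (f' '' Icc 0 1))).Finite := by
  set μ : Measure ℂ := volume with hμ
  set ν : Measure ℝ := (volume : Measure ℝ).restrict (Set.Ioc (-Real.pi) Real.pi) with hν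
  set G : ℝ × ℝ × ℝ → ℂ × ℝ :=
    fun q => (f q.1 - Complex.exp (q.2.2 * Complex.I) * f' q.2.1, q.2.2) with hG
  have hGcont : Continuous G := by
    refine Continuous.prodMk ?_ (continuous_snd.comp continuous_snd)
    exact (hf.continuous.comp continuous_fst).sub
      ((Complex.continuous_exp.comp ((Complex.continuous_ofReal.comp
        (continuous_snd.comp continuous_snd)).mul continuous_const)).mul
        (hf'.continuous.comp (continuous_fst.comp continuous_snd)))
  set Q : ℕ → ℕ → Set ℝ := fun k i => Icc ((i:ℝ)/((k:ℝ)+1)) (((i:ℝ)+1)/((k:ℝ)+1)) with hQ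
  set T : ℕ → ℕ → ℕ → Set (ℂ × ℝ) := fun k i j =>
    G '' (Q k i ×ˢ (Q k j ×ˢ Icc (-Real.pi) Real.pi)) with hT
  have hTmeas : ∀ k i j, MeasurableSet (T k i j) := fun k i j =>
    (((isCompact_Icc.prod (isCompact_Icc.prod isCompact_Icc)).image hGcont)).measurableSet
  set F : ℕ → ℂ × ℝ → ℝ≥0∞ := fun k p =>
    ∑ i : Fin (k+1), ∑ j : Fin (k+1), (T k i j).indicator (fun _ => (1:ℝ≥0∞)) p with hF
  have hFmeas : ∀ k, Measurable (F k) := fun k =>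
    Finset.measurable_sum _ fun i _ => Finset.measurable_sum _ fun j _ =>
      measurable_const.indicator (hTmeas k i j)
  -- slice bound
  have hslice : ∀ (k i j : ℕ) (θ : ℝ),
      ((fun x => (x, θ)) ⁻¹' T k i j) ⊆
        Metric.closedBall (f ((i:ℝ)/((k:ℝ)+1)) -
          Complex.exp (θ * Complex.I) * f' ((j:ℝ)/((k:ℝ)+1)))
          (((K:ℝ) + (K':ℝ))/((k:ℝ)+1)) := by
    intro k i j θ x hx
    obtain ⟨q, hq, hqeq⟩ := hx
    have hθ : q.2.2 = θ := congrArg Prod.snd hqeq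
    have hxval : f q.1 - Complex.exp (q.2.2 * Complex.I) * f' q.2.1 = x :=
      congrArg Prod.fst hqeq
    have hN : (0:ℝ) < (k:ℝ) + 1 := by positivity
    have hd1 : dist q.1 ((i:ℝ)/((k:ℝ)+1)) ≤ 1/((k:ℝ)+1) := by
      have h1 := hq.1.1
      have h2 := hq.1.2
      rw [Real.dist_eq, abs_sub_le_iff]
      constructor <;> [skip; skip] <;>
      · have : ((i:ℝ)+1)/((k:ℝ)+1) - (i:ℝ)/((k:ℝ)+1) = 1/((k:ℝ)+1) := by ring
        linarith
    have hd2 : dist q.2.1 ((j:ℝ)/((k:ℝ)+1)) ≤ 1/((k:ℝ)+1) := by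
      have h1 := hq.2.1.1
      have h2 := hq.2.1.2
      rw [Real.dist_eq, abs_sub_le_iff]
      constructor <;> [skip; skip] <;>
      · have : ((j:ℝ)+1)/((k:ℝ)+1) - (j:ℝ)/((k:ℝ)+1) = 1/((k:ℝ)+1) := by ring
        linarith
    rw [Metric.mem_closedBall, ← hxval, hθ]
    have habs : ‖Complex.exp (θ * Complex.I)‖ = 1 :=
      Complex.norm_exp_ofReal_mul_I θ
    calc dist (f q.1 - Complex.exp (θ * Complex.I) * f' q.2.1)
          (f ((i:ℝ)/((k:ℝ)+1)) - Complex.exp (θ * Complex.I) * f' ((j:ℝ)/((k:ℝ)+1)))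
        = ‖(f q.1 - f ((i:ℝ)/((k:ℝ)+1))) -
            Complex.exp (θ * Complex.I) * (f' q.2.1 - f' ((j:ℝ)/((k:ℝ)+1)))‖ := by
          rw [Complex.dist_eq]; congr 1; ring
      _ ≤ ‖f q.1 - f ((i:ℝ)/((k:ℝ)+1))‖ +
            ‖Complex.exp (θ * Complex.I) * (f' q.2.1 - f' ((j:ℝ)/((k:ℝ)+1)))‖ := by
          exact (norm_sub_le _ _)
      _ ≤ (K:ℝ) * (1/((k:ℝ)+1)) + 1 * ((K':ℝ) * (1/((k:ℝ)+1))) := by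
          refine add_le_add ?_ ?_
          · refine le_trans ?_ (mul_le_mul_of_nonneg_left hd1 K.2)
            rw [← Complex.dist_eq]
            exact hf.dist_le_mul _ _
          · rw [norm_mul, habs, one_mul, one_mul]
            refine le_trans ?_ (mul_le_mul_of_nonneg_left hd2 K'.2)
            rw [← Complex.dist_eq]
            exact hf'.dist_le_mul _ _
      _ ≤ ((K:ℝ) + (K':ℝ))/((k:ℝ)+1) := by
          rw [div_eq_mul_one_div]
          ring_nf
          exact le_refl _
  -- measure bound per cell
  set B1 : ℝ≥0∞ := volume (Metric.ball (0:ℂ) 1) with hB1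
  have hB1fin : B1 < ⊤ := measure_ball_lt_top
  have hνfin : ν univ < ⊤ := by
    rw [hν, Measure.restrict_apply_univ]
    exact measure_Ioc_lt_top
  have hc0 : (0:ℝ) ≤ (K:ℝ) + (K':ℝ) := add_nonneg K.2 K'.2
  have hTbound : ∀ k i j, (μ.prod ν) (T k i j) ≤
      ENNReal.ofReal ((((K:ℝ) + (K':ℝ))/((k:ℝ)+1))^2) * (B1 * ν univ) := by
    intro k i j
    have hN : (0:ℝ) < (k:ℝ) + 1 := by positivity
    rw [Measure.prod_apply_symm (hTmeas k i j)]
    calc ∫⁻ θ, μ ((fun x => (x, θ)) ⁻¹' T k i j) ∂ν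
        ≤ ∫⁻ _, ENNReal.ofReal ((((K:ℝ) + (K':ℝ))/((k:ℝ)+1))^2) * B1 ∂ν := by
          refine lintegral_mono fun θ => ?_
          refine (measure_mono (hslice k i j θ)).trans ?_
          rw [hμ, Measure.addHaar_closedBall _ _ (div_nonneg hc0 hN.le),
            Complex.finrank_real_complex]
      _ = ENNReal.ofReal ((((K:ℝ) + (K':ℝ))/((k:ℝ)+1))^2) * (B1 * ν univ) := by
          rw [lintegral_const, mul_assoc]
  -- integral bound
  set C : ℝ≥0∞ := ENNReal.ofReal (((K:ℝ) + (K':ℝ))^2) * (B1 * ν univ) with hC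
  have hCfin : C < ⊤ :=
    ENNReal.mul_lt_top ENNReal.ofReal_lt_top (ENNReal.mul_lt_top hB1fin hνfin)
  have hint : ∀ k, ∫⁻ p, F k p ∂(μ.prod ν) ≤ C := by
    intro k
    have hN : (0:ℝ) < (k:ℝ) + 1 := by positivity
    have hmeas1 : ∀ i : Fin (k+1), Measurable fun p =>
        ∑ j : Fin (k+1), (T k (i:ℕ) (j:ℕ)).indicator (fun _ => (1:ℝ≥0∞)) p :=
      fun i => Finset.measurable_sum _ fun j _ => measurable_const.indicator (hTmeas k i j)
    simp only [hF]
    rw [show (∫⁻ p, ∑ i : Fin (k+1), ∑ j : Fin (k+1),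
          (T k (i:ℕ) (j:ℕ)).indicator (fun _ => (1:ℝ≥0∞)) p ∂(μ.prod ν))
        = ∑ i : Fin (k+1), ∫⁻ p, ∑ j : Fin (k+1),
          (T k (i:ℕ) (j:ℕ)).indicator (fun _ => (1:ℝ≥0∞)) p ∂(μ.prod ν) from
      lintegral_finset_sum _ fun i _ => hmeas1 i]
    have hstep : ∀ i : Fin (k+1),
        ∫⁻ p, ∑ j : Fin (k+1), (T k (i:ℕ) (j:ℕ)).indicator (fun _ => (1:ℝ≥0∞)) p ∂(μ.prod ν)
          = ∑ j : Fin (k+1), (μ.prod ν) (T k (i:ℕ) (j:ℕ)) := by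
      intro i
      calc ∫⁻ p, ∑ j : Fin (k+1), (T k (i:ℕ) (j:ℕ)).indicator (fun _ => (1:ℝ≥0∞)) p ∂(μ.prod ν)
          = ∑ j : Fin (k+1), ∫⁻ p, (T k (i:ℕ) (j:ℕ)).indicator (fun _ => (1:ℝ≥0∞)) p ∂(μ.prod ν) :=
            lintegral_finset_sum _ fun j _ => measurable_const.indicator (hTmeas k i j)
        _ = ∑ j : Fin (k+1), (μ.prod ν) (T k (i:ℕ) (j:ℕ)) :=
            Finset.sum_congr rfl fun j _ => by
              rw [lintegral_indicator (hTmeas k i j), setLIntegral_one]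
    calc ∑ i : Fin (k+1), ∫⁻ p, ∑ j : Fin (k+1), (T k (i:ℕ) (j:ℕ)).indicator (fun _ => (1:ℝ≥0∞)) p ∂(μ.prod ν)
        = ∑ i : Fin (k+1), ∑ j : Fin (k+1), (μ.prod ν) (T k (i:ℕ) (j:ℕ)) :=
          Finset.sum_congr rfl fun i _ => hstep i
      _ ≤ ∑ _i : Fin (k+1), ∑ _j : Fin (k+1),
            ENNReal.ofReal ((((K:ℝ) + (K':ℝ))/((k:ℝ)+1))^2) * (B1 * ν univ) :=
          Finset.sum_le_sum fun i _ => Finset.sum_le_sum fun j _ => hTbound k i j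
      _ = ((k:ℝ≥0∞)+1) * (((k:ℝ≥0∞)+1) *
            (ENNReal.ofReal ((((K:ℝ) + (K':ℝ))/((k:ℝ)+1))^2) * (B1 * ν univ))) := by
          simp [Finset.sum_const, Finset.card_univ, nsmul_eq_mul]
      _ = C := by
          rw [hC]
          have h1 : ((k:ℝ≥0∞)+1) = ENNReal.ofReal ((k:ℝ)+1) := by
            rw [ENNReal.ofReal_add (by positivity) zero_le_one]
            simp [ENNReal.ofReal_natCast]
          rw [h1, ← mul_assoc, ← mul_assoc, ← ENNReal.ofReal_mul (by positivity),
            ← ENNReal.ofReal_mul (by positivity)]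
          congr 2
          field_simp
  -- Fatou
  have hFatou : ∫⁻ p, Filter.liminf (fun k => F k p) Filter.atTop ∂(μ.prod ν) ≤ C := by
    refine (lintegral_liminf_le hFmeas).trans ?_
    refine Filter.liminf_le_of_le (by isBoundedDefault) ?_
    intro b hb
    obtain ⟨k, hk⟩ := hb.exists
    exact hk.trans (hint k)
  have hae1 : ∀ᵐ p ∂(μ.prod ν), Filter.liminf (fun k => F k p) Filter.atTop < ⊤ :=
    ae_lt_top (Measurable.liminf hFmeas) (ne_of_lt (lt_of_le_of_lt hFatou hCfin))
  have hae2 : ∀ᵐ p : ℂ × ℝ ∂(μ.prod ν), p.2 ∈ Set.Ioc (-Real.pi) Real.pi := by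
    rw [Filter.eventually_iff, mem_ae_iff]
    have hset : {p : ℂ × ℝ | p.2 ∈ Set.Ioc (-Real.pi) Real.pi}ᶜ
        = (univ : Set ℂ) ×ˢ (Set.Ioc (-Real.pi) Real.pi)ᶜ := by
      ext p
      simp [Set.mem_prod]
    rw [hset, Measure.prod_prod]
    have : ν ((Set.Ioc (-Real.pi) Real.pi)ᶜ) = 0 := by
      rw [hν, Measure.restrict_apply measurableSet_Ioc.compl]
      simp
    rw [this, mul_zero]
  filter_upwards [hae1, hae2] with p hlim hmem
  by_contra hinf
  obtain ⟨m, hm⟩ := ENNReal.exists_nat_gt (ne_of_lt hlim)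
  -- get m distinct points of the intersection
  obtain ⟨t, hts, htfin, htcard⟩ := Set.Infinite.exists_subset_ncard_eq hinf m
  have hparam : ∀ y ∈ t, ∃ ab : ℝ × ℝ, ab.1 ∈ Icc (0:ℝ) 1 ∧ ab.2 ∈ Icc (0:ℝ) 1 ∧
      f ab.1 = y ∧ Complex.exp (p.2 * Complex.I) * f' ab.2 + p.1 = y := by
    intro y hy
    obtain ⟨⟨a, ha, hfa⟩, ⟨z, ⟨b, hb, rfl⟩, hz⟩⟩ := hts hy
    exact ⟨(a, b), ha, hb, hfa, hz⟩
  choose! φ hφ1 hφ2 hφ3 hφ4 using hparam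
  -- eventual separation of cells
  have hkey : ∀ᶠ k : ℕ in Filter.atTop, ∀ y ∈ t, ∀ y' ∈ t, y ≠ y' →
      (1:ℝ)/((k:ℝ)+1) < max |(φ y).1 - (φ y').1| |(φ y).2 - (φ y').2| := by
    rw [Filter.eventually_all_finite htfin]
    intro y hy
    rw [Filter.eventually_all_finite htfin]
    intro y' hy'
    rcases eq_or_ne y y' with rfl | hne
    · exact Filter.Eventually.of_forall fun k h => absurd rfl h
    · have hφne : φ y ≠ φ y' := by
        intro h
        apply hne
        rw [← hφ3 y hy, ← hφ3 y' hy', h]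
      have hδ : 0 < max |(φ y).1 - (φ y').1| |(φ y).2 - (φ y').2| := by
        have h := Prod.ext_iff.not.mp hφne
        push_neg at h
        rcases Classical.em ((φ y).1 = (φ y').1) with h1 | h1
        · exact lt_max_of_lt_right (abs_pos.mpr (sub_ne_zero.mpr (h h1)))
        · exact lt_max_of_lt_left (abs_pos.mpr (sub_ne_zero.mpr h1))
      have hlt := tendsto_one_div_add_atTop_nhds_zero_nat.eventually_lt_const hδ
      exact hlt.mono fun k hk _ => hk
  refine absurd hm (not_lt.mpr ?_)
  refine Filter.le_liminf_of_le (by isBoundedDefault) ?_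
  filter_upwards [hkey] with k hk
  set cell : ℝ → Fin (k+1) :=
    fun a => ⟨min ⌊a * ((k:ℝ)+1)⌋₊ k, Nat.lt_succ_of_le (min_le_right _ _)⟩ with hcell
  set ι : ℂ → Fin (k+1) × Fin (k+1) := fun y => (cell (φ y).1, cell (φ y).2) with hι
  have hmemT : ∀ y ∈ t, p ∈ T k ((ι y).1 : ℕ) ((ι y).2 : ℕ) := by
    intro y hy
    refine ⟨((φ y).1, (φ y).2, p.2), ⟨?_, ?_, ?_⟩, ?_⟩
    · exact cell_mem (hφ1 y hy) k
    · exact cell_mem (hφ2 y hy) k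
    · exact ⟨hmem.1.le, hmem.2⟩
    · show (f (φ y).1 - Complex.exp (p.2 * Complex.I) * f' (φ y).2, p.2) = p
      have h4 := hφ4 y hy
      have h3 := hφ3 y hy
      refine Prod.ext ?_ rfl
      show f (φ y).1 - Complex.exp (p.2 * Complex.I) * f' (φ y).2 = p.1
      linear_combination h3 - h4
  have hιinj : ∀ y ∈ t, ∀ y' ∈ t, y ≠ y' → ι y ≠ ι y' := by
    intro y hy y' hy' hne heq
    have h1 : cell (φ y).1 = cell (φ y').1 := congrArg Prod.fst heq
    have h2 : cell (φ y).2 = cell (φ y').2 := congrArg Prod.snd heq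
    have e1 : |(φ y).1 - (φ y').1| ≤ 1/((k:ℝ)+1) :=
      cell_sep (hφ1 y hy) (hφ1 y' hy') (congrArg Fin.val h1)
    have e2 : |(φ y).2 - (φ y').2| ≤ 1/((k:ℝ)+1) :=
      cell_sep (hφ2 y hy) (hφ2 y' hy') (congrArg Fin.val h2)
    have hmax := max_le e1 e2
    have := hk y hy y' hy' hne
    linarith
  have hcard : (htfin.toFinset.image ι).card = m := by
    rw [Finset.card_image_of_injOn ?_, ← htcard, Set.ncard_eq_toFinset_card t htfin]
    intro y hy y' hy' h
    by_contra hne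
    exact hιinj y (by simpa using hy) y' (by simpa using hy') hne h
  calc (m:ℝ≥0∞) = ((htfin.toFinset.image ι).card : ℝ≥0∞) := by rw [hcard]
    _ = ∑ _q ∈ htfin.toFinset.image ι, (1:ℝ≥0∞) := by
        rw [Finset.sum_const, nsmul_eq_mul, mul_one]
    _ ≤ ∑ q ∈ htfin.toFinset.image ι,
          (T k ((q.1:Fin (k+1)):ℕ) ((q.2:Fin (k+1)):ℕ)).indicator (fun _ => (1:ℝ≥0∞)) p := by
        refine Finset.sum_le_sum fun q hq => ?_
        obtain ⟨y, hy, rfl⟩ := Finset.mem_image.mp hq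
        exact le_of_eq (Set.indicator_of_mem (hmemT y (htfin.mem_toFinset.mp hy)) (fun _ => (1:ℝ≥0∞))).symm
    _ ≤ ∑ q : Fin (k+1) × Fin (k+1),
          (T k (q.1:ℕ) (q.2:ℕ)).indicator (fun _ => (1:ℝ≥0∞)) p :=
        Finset.sum_le_sum_of_subset (Finset.subset_univ _)
    _ = F k p := by
        simp only [hF]
        exact Fintype.sum_prod_type _


/-- For rectifiable curves `γ, γ'` in the plane, for Lebesgue-almost every pair
`(x, θ) ∈ ℝ² × (-π,π]` the intersection `γ ∩ (ρ_θ(γ') + x)` is a finite set.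
Rotation by `θ` is multiplication by `exp(θ i)` in `ℂ`. -/
theorem ae_finite_intersection (γ γ' : Set ℂ)
    (hγ : IsRectifiableCurve γ) (hγ' : IsRectifiableCurve γ') :
    ∀ᵐ p : ℂ × ℝ
        ∂((volume : Measure ℂ).prod
            ((volume : Measure ℝ).restrict (Set.Ioc (-Real.pi) Real.pi))),
      (γ ∩ ((fun a : ℂ => Complex.exp (p.2 * Complex.I) * a + p.1) '' γ')).Finite := by
  obtain ⟨f, K, hf, hsub⟩ := exists_lipschitz_cover hγ
  obtain ⟨f', K', hf', hsub'⟩ := exists_lipschitz_cover hγ'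
  filter_upwards [main_aux hf hf'] with p hp
  exact hp.subset (inter_subset_inter hsub (image_mono hsub'))
end
end

section
/- Connectedness of the frontier of an open plane set with connected complement (the unicoherence argument used in the proofs of Lemma 7.9 and Theorem 3.3): Let U ⊆ ℝ² be an open set such that U is preconnected and ℝ² \ U is preconnected. Then the topological frontier ∂U = closure(U) \ U is preconnected. (This follows because closure(U) and ℝ² \ U are closed connected sets whose union is ℝ², so by the unicoherence of ℝ² their intersection, which equals ∂U, is connected.) -/
noncomputable section

open Complex Metric Set Finset

local notation "E" => EuclideanSpace ℝ (Fin 2)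

section helpers

lemma int_valued_const {X : Type*} [TopologicalSpace X] {s : Set X} (hs : IsPreconnected s)
    {w : X → ℝ} (hw : ContinuousOn w s) (hint : ∀ x ∈ s, ∃ m : ℤ, w x = m)
    {x y : X} (hx : x ∈ s) (hy : y ∈ s) : w x = w y := by
  have key : ∀ a b : X, a ∈ s → b ∈ s → w a < w b → False := by
    intro a b ha hb hab
    obtain ⟨ma, hma⟩ := hint a ha
    obtain ⟨mb, hmb⟩ := hint b hb
    have hmamb : ma < mb := by exact_mod_cast hma ▸ hmb ▸ hab
    have h1 : (ma:ℝ) + 1 ≤ mb := by exact_mod_cast hmamb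
    have h2 : w a + 1/2 ∈ Icc (w a) (w b) := ⟨by linarith, by rw [hma, hmb]; linarith⟩
    obtain ⟨z, hz, hwz⟩ := hs.intermediate_value ha hb hw h2
    obtain ⟨mz, hmz⟩ := hint z hz
    rw [hmz, hma] at hwz
    have h3 : (2*mz : ℝ) = 2*ma + 1 := by linarith
    have : (2*mz : ℤ) = 2*ma + 1 := by exact_mod_cast h3
    omega
  rcases lt_trichotomy (w x) (w y) with h | h | h
  · exact absurd (key x y hx hy h) (by simp)
  · exact h
  · exact absurd (key y x hy hx h) (by simp)

end helpers

section lift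

noncomputable def liftFun (f : E → ℂ) (n : ℕ) (c : ℝ) (x : E) : ℝ :=
  c + ∑ k ∈ Finset.range n, Complex.arg (f (((k+1:ℝ)/n) • x) / f (((k:ℝ)/n) • x))

def works (f : E → ℂ) (n : ℕ) (R : ℝ) : Prop :=
  ∀ x ∈ closedBall (0:E) R, ∀ k < n, ‖f (((k+1:ℝ)/n) • x) - f (((k:ℝ)/n) • x)‖ < 1

lemma works_mono {f : E → ℂ} {n : ℕ} {R R' : ℝ} (h : works f n R') (hR : R ≤ R') :
    works f n R := fun x hx => h x (closedBall_subset_closedBall hR hx)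

lemma fne {f : E → ℂ} (habs : ∀ x, ‖f x‖ = 1) (x : E) : f x ≠ 0 := by
  intro h; have := habs x; rw [h] at this; simp at this

lemma slit_of_close {a b : ℂ} (ha : ‖a‖ = 1) (hb : ‖b‖ = 1)
    (h : ‖a - b‖ < 1) : a / b ∈ slitPlane := by
  set q := a / b with hq
  have habsq : ‖q‖ = 1 := by
    rw [hq, norm_div, ha, hb]; norm_num
  rw [mem_slitPlane_iff]
  by_contra hcon
  push_neg at hcon
  obtain ⟨hre, him⟩ := hcon
  have hqre : q = (q.re : ℂ) := Complex.ext rfl (by simpa using him)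
  have habs' : |q.re| = 1 := by
    have := habsq
    rw [hqre, Complex.norm_real, Real.norm_eq_abs] at this
    exact this
  have hqneg : q = -1 := by
    rw [hqre]
    rcases abs_cases q.re with ⟨h1, _⟩ | ⟨h1, _⟩
    · exfalso; rw [habs'] at h1; linarith
    · have : q.re = -1 := by linarith
      rw [this]; norm_num
  have hb0 : b ≠ 0 := by intro h0; rw [h0] at hb; simp at hb
  have hab : a = -b := by
    rw [hq, div_eq_iff hb0] at hqneg
    linear_combination hqneg
  rw [hab] at h
  have h2 : ‖-b - b‖ = 2 := by
    have he : -b - b = -(2*b) := by ring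
    rw [he, norm_neg]
    simp [hb]
  linarith [h, h2.symm.le]

lemma works_exists (f : E → ℂ) (hf : Continuous f) (R : ℝ) :
    ∃ n : ℕ, 1 ≤ n ∧ works f n R := by
  set K : Set (ℝ × E) := Icc (0:ℝ) 1 ×ˢ closedBall (0:E) R with hK
  have hKc : IsCompact K := (isCompact_Icc).prod (isCompact_closedBall _ _)
  set g : ℝ × E → ℂ := fun p => f (p.1 • p.2) with hg
  have hgc : Continuous g := hf.comp (continuous_fst.smul continuous_snd)
  have huc := hKc.uniformContinuousOn_of_continuous hgc.continuousOn
  rw [uniformContinuousOn_iff] at huc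
  obtain ⟨δ, hδ, hδ'⟩ := huc 1 one_pos
  obtain ⟨n, hn⟩ := exists_nat_one_div_lt hδ
  refine ⟨n + 1, le_add_self, ?_⟩
  intro x hx k hk
  have hn1 : (0:ℝ) < n + 1 := by positivity
  have hmem : ∀ j : ℕ, j ≤ n + 1 → ((j:ℝ)/(n+1), x) ∈ K := by
    intro j hj
    refine ⟨⟨by positivity, ?_⟩, hx⟩
    rw [div_le_one hn1]
    exact_mod_cast hj
  have h1 := hmem (k+1) (by omega)
  have h2 := hmem k (by omega)
  have hd : dist (((k+1:ℕ):ℝ)/(n+1), x) (((k:ℕ):ℝ)/(n+1), x) < δ := by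
    rw [Prod.dist_eq]
    simp only [dist_self]
    rw [Real.dist_eq]
    have : |((k+1:ℕ):ℝ)/(n+1) - ((k:ℕ):ℝ)/(n+1)| = 1/(n+1) := by
      push_cast
      rw [div_sub_div_same]
      norm_num
      positivity
    push_cast at this ⊢
    rw [this]
    exact max_lt hn hδ
  have := hδ' _ h1 _ h2 hd
  rw [dist_eq_norm] at this
  simp only [g] at this
  push_cast at this ⊢
  convert this using 4 <;> norm_num

lemma prod_telescope (F : ℕ → ℂ) (hF : ∀ k, F k ≠ 0) (m : ℕ) :
    ∏ k ∈ Finset.range m, F (k+1) / F k = F m / F 0 := by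
  induction m with
  | zero => simp [div_self (hF 0)]
  | succ m ih =>
    rw [Finset.prod_range_succ, ih]
    field_simp [hF]

lemma liftFun_exp {f : E → ℂ} (habs : ∀ x, ‖f x‖ = 1) {c : ℝ} {n : ℕ}
    (hc : Complex.exp ((c:ℂ) * I) = f 0) (hn : 1 ≤ n) (x : E) :
    Complex.exp (((liftFun f n c x : ℝ) : ℂ) * I) = f x := by
  have key : ((liftFun f n c x : ℝ) : ℂ) * I
      = (c:ℂ) * I + ∑ k ∈ Finset.range n,
        ((Complex.arg (f (((k+1:ℝ)/n) • x) / f (((k:ℝ)/n) • x)) : ℝ) : ℂ) * I := by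
    rw [liftFun]
    push_cast
    rw [add_mul, Finset.sum_mul]
  rw [key, Complex.exp_add, Complex.exp_sum, hc]
  have habs1 : ∀ k : ℕ, ‖f (((k+1:ℝ)/n) • x) / f (((k:ℝ)/n) • x)‖ = 1 := by
    intro k; rw [norm_div, habs, habs, div_one]
  have hterm : ∀ k ∈ Finset.range n,
      Complex.exp (((Complex.arg (f (((k+1:ℝ)/n) • x) / f (((k:ℝ)/n) • x)) : ℝ) : ℂ) * I)
      = f (((k+1:ℝ)/n) • x) / f (((k:ℝ)/n) • x) := by
    intro k _
    have := Complex.norm_mul_exp_arg_mul_I (f (((k+1:ℝ)/n) • x) / f (((k:ℝ)/n) • x))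
    rw [habs1 k, Complex.ofReal_one, one_mul] at this
    exact this
  rw [Finset.prod_congr rfl hterm]
  have htel := prod_telescope (fun k => f (((k:ℝ)/n) • x)) (fun k => fne habs _) n
  push_cast at htel
  rw [htel]
  have hnn : ((n:ℝ)) ≠ 0 := by
    have : (0:ℕ) < n := hn
    positivity
  rw [div_self hnn, zero_div, one_smul, zero_smul]
  rw [mul_div_cancel₀ _ (fne habs 0)]

lemma liftFun_zero {f : E → ℂ} (habs : ∀ x, ‖f x‖ = 1) (n : ℕ) (c : ℝ) :
    liftFun f n c 0 = c := by
  rw [liftFun]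
  have : ∀ k ∈ Finset.range n,
      Complex.arg (f (((k+1:ℝ)/n) • (0:E)) / f (((k:ℝ)/n) • (0:E))) = 0 := by
    intro k _
    rw [smul_zero, smul_zero, div_self (fne habs 0), Complex.arg_one]
  rw [Finset.sum_congr rfl this]
  simp

lemma liftFun_cont {f : E → ℂ} (hf : Continuous f) (habs : ∀ x, ‖f x‖ = 1)
    {n : ℕ} {R : ℝ} (hw : works f n R) (c : ℝ) :
    ContinuousOn (liftFun f n c) (closedBall (0:E) R) := by
  apply continuousOn_const.add
  apply continuousOn_finset_sum
  intro k hk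
  intro x hx
  have hcq : Continuous (fun y : E => f (((k+1:ℝ)/n) • y) / f (((k:ℝ)/n) • y)) := by
    apply Continuous.div
    · exact hf.comp (continuous_const_smul _)
    · exact hf.comp (continuous_const_smul _)
    · intro y; exact fne habs _
  have hslit : f (((k+1:ℝ)/n) • x) / f (((k:ℝ)/n) • x) ∈ slitPlane :=
    slit_of_close (habs _) (habs _) (hw x hx k (Finset.mem_range.mp hk))
  have : ContinuousAt (fun y : E => Complex.arg (f (((k+1:ℝ)/n) • y) / f (((k:ℝ)/n) • y))) x :=
    ContinuousAt.comp (x := x) (g := Complex.arg) (continuousAt_arg hslit) hcq.continuousAt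
  exact this.continuousWithinAt

-- exp(w*I) = 1 implies w is an integer multiple of 2π
lemma exp_eq_one_int {w : ℝ} (h : Complex.exp ((w:ℂ) * I) = 1) :
    ∃ m : ℤ, w = 2 * Real.pi * m := by
  rw [Complex.exp_eq_one_iff] at h
  obtain ⟨m, hm⟩ := h
  refine ⟨m, ?_⟩
  have h2' : (w:ℂ) * I = ((m:ℂ) * (2 * Real.pi)) * I := by rw [hm]; ring
  have h2 : (w : ℂ) = m * (2 * Real.pi) := mul_right_cancel₀ Complex.I_ne_zero h2'
  have : w = (m:ℝ) * (2 * Real.pi) := by exact_mod_cast h2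
  rw [this]; ring

lemma liftFun_agree {f : E → ℂ} (hf : Continuous f) (habs : ∀ x, ‖f x‖ = 1)
    {c : ℝ} (hc : Complex.exp ((c:ℂ) * I) = f 0) {n n' : ℕ} {R : ℝ}
    (hn : 1 ≤ n) (hn' : 1 ≤ n') (hR : 0 ≤ R)
    (hw : works f n R) (hw' : works f n' R) :
    EqOn (liftFun f n c) (liftFun f n' c) (closedBall (0:E) R) := by
  intro x hx
  set d : E → ℝ := fun y => (liftFun f n c y - liftFun f n' c y) / (2 * Real.pi) with hd
  have hpre : IsPreconnected (closedBall (0:E) R) := (convex_closedBall _ _).isPreconnected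
  have hdc : ContinuousOn d (closedBall (0:E) R) :=
    ((liftFun_cont hf habs hw c).sub (liftFun_cont hf habs hw' c)).div_const _
  have hint : ∀ y ∈ closedBall (0:E) R, ∃ m : ℤ, d y = m := by
    intro y _
    have h1 := liftFun_exp habs hc hn y
    have h2 := liftFun_exp habs hc hn' y
    have : Complex.exp (((liftFun f n c y - liftFun f n' c y : ℝ) : ℂ) * I) = 1 := by
      rw [Complex.ofReal_sub, sub_mul, Complex.exp_sub, h1, h2, div_self (fne habs y)]
    obtain ⟨m, hm⟩ := exp_eq_one_int this
    refine ⟨m, ?_⟩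
    simp only [hd]
    rw [hm]
    field_simp
  have h0 : (0:E) ∈ closedBall (0:E) R := mem_closedBall_self hR
  have := int_valued_const hpre hdc hint hx h0
  have hd0 : d 0 = 0 := by
    rw [hd]; simp only; rw [liftFun_zero habs, liftFun_zero habs]; simp
  rw [hd0] at this
  have : liftFun f n c x - liftFun f n' c x = 0 := by
    have h2pi : (2 * Real.pi) ≠ 0 := by positivity
    simp only [hd, div_eq_zero_iff, h2pi, or_false] at this
    exact this
  linarith

theorem exists_circle_lift (f : E → ℂ) (hf : Continuous f)
    (habs : ∀ x, ‖f x‖ = 1) :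
    ∃ v : E → ℝ, Continuous v ∧ ∀ x, Complex.exp (((v x : ℝ) : ℂ) * I) = f x := by
  choose N hN1 hN2 using fun m : ℕ => works_exists f hf (m : ℝ)
  set c : ℝ := Complex.arg (f 0) with hcdef
  have hc : Complex.exp ((c:ℂ) * I) = f 0 := by
    have := Complex.norm_mul_exp_arg_mul_I (f 0)
    rw [habs 0, Complex.ofReal_one, one_mul] at this
    exact this
  set v : E → ℝ := fun x => liftFun f (N (⌈‖x‖⌉₊ + 1)) c x with hv
  have glob : ∀ (x : E) (m : ℕ), ‖x‖ ≤ m → v x = liftFun f (N m) c x := by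
    intro x m hxm
    set m₀ : ℕ := ⌈‖x‖⌉₊ + 1 with hm₀
    set R : ℝ := min (m₀ : ℝ) (m : ℝ) with hR
    have hxR : x ∈ closedBall (0:E) R := by
      rw [mem_closedBall_zero_iff]
      refine le_min ?_ hxm
      calc ‖x‖ ≤ (⌈‖x‖⌉₊ : ℝ) := Nat.le_ceil _
        _ ≤ (m₀ : ℝ) := by rw [hm₀]; push_cast; linarith
    have hR0 : 0 ≤ R := le_min (by positivity) (by positivity)
    exact liftFun_agree hf habs hc (hN1 m₀) (hN1 m) hR0
      (works_mono (hN2 m₀) (min_le_left _ _))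
      (works_mono (hN2 m) (min_le_right _ _)) hxR
  refine ⟨v, ?_, ?_⟩
  · rw [continuous_iff_continuousAt]
    intro x
    set m : ℕ := ⌈‖x‖⌉₊ + 1 with hm
    have hxm : ‖x‖ < (m : ℝ) := by
      calc ‖x‖ ≤ (⌈‖x‖⌉₊ : ℝ) := Nat.le_ceil _
        _ < (m : ℝ) := by rw [hm]; push_cast; linarith
    have hball : ball (0:E) (m:ℝ) ∈ nhds x := by
      exact (isOpen_ball).mem_nhds (by rwa [mem_ball_zero_iff])
    have hCA : ContinuousAt (liftFun f (N m) c) x := by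
      apply (liftFun_cont hf habs (hN2 m) c).continuousAt
      exact Filter.mem_of_superset hball ball_subset_closedBall
    apply hCA.congr
    apply Filter.eventuallyEq_of_mem hball
    intro y hy
    exact (glob y m (le_of_lt (by rwa [mem_ball_zero_iff] at hy))).symm
  · intro x
    rw [hv]
    exact liftFun_exp habs hc (hN1 _) x

end lift


/-- Unicoherence of the plane: if `U` is an open subset of `ℝ²` such that both
`U` and its complement are preconnected, then the topological frontier of `U`
is preconnected. -/
theorem frontier_preconnected_of_open (U : Set (EuclideanSpace ℝ (Fin 2)))
    (hU : IsOpen U) (hconn : IsPreconnected U) (hconn' : IsPreconnected Uᶜ) :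
    IsPreconnected (frontier U) := by
  classical
  by_contra hnc
  rw [IsPreconnected] at hnc
  push_neg at hnc
  obtain ⟨u, v, hu, hv, hcover, hne_u, hne_v, hsep⟩ := hnc
  have hsep' : frontier U ∩ (u ∩ v) = ∅ := hsep
  set P := frontier U \ u with hPdef
  set Q := frontier U \ v with hQdef
  have hPc : IsClosed P := isClosed_frontier.sdiff hu
  have hQc : IsClosed Q := isClosed_frontier.sdiff hv
  have hPQdisj : Disjoint P Q := by
    rw [Set.disjoint_left]
    rintro z ⟨hzf, hzu⟩ ⟨-, hzv⟩
    rcases hcover hzf with h | h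
    · exact hzu h
    · exact hzv h
  have hPQ : P ∪ Q = frontier U := by
    apply Set.Subset.antisymm
    · rintro z (⟨hz, -⟩ | ⟨hz, -⟩) <;> exact hz
    · intro z hz
      by_cases hzu : z ∈ u
      · right
        refine ⟨hz, fun hzv => ?_⟩
        have : z ∈ frontier U ∩ (u ∩ v) := ⟨hz, hzu, hzv⟩
        rw [hsep'] at this
        exact this
      · exact Or.inl ⟨hz, hzu⟩
  have hPne : P.Nonempty := by
    obtain ⟨z, hzf, hzv⟩ := hne_v
    refine ⟨z, hzf, fun hzu => ?_⟩
    have : z ∈ frontier U ∩ (u ∩ v) := ⟨hzf, hzu, hzv⟩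
    rw [hsep'] at this
    exact this
  have hQne : Q.Nonempty := by
    obtain ⟨z, hzf, hzu⟩ := hne_u
    refine ⟨z, hzf, fun hzv => ?_⟩
    have : z ∈ frontier U ∩ (u ∩ v) := ⟨hzf, hzu, hzv⟩
    rw [hsep'] at this
    exact this
  obtain ⟨φ, hφP, hφQ, hφ01⟩ := exists_continuous_zero_one_of_isClosed hPc hQc hPQdisj
  set g₁ : E → ℂ := fun x => Complex.exp (((Real.pi * φ x : ℝ) : ℂ) * I) with hg₁def
  set g₂ : E → ℂ := fun x => Complex.exp (((-(Real.pi * φ x) : ℝ) : ℂ) * I) with hg₂def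
  have hg₁c : Continuous g₁ :=
    Complex.continuous_exp.comp
      ((Complex.continuous_ofReal.comp (continuous_const.mul φ.continuous)).mul continuous_const)
  have hg₂c : Continuous g₂ :=
    Complex.continuous_exp.comp
      ((Complex.continuous_ofReal.comp ((continuous_const.mul φ.continuous).neg)).mul
        continuous_const)
  have hg12 : ∀ a ∈ frontier U, g₁ a = g₂ a := by
    intro a ha
    rw [← hPQ] at ha
    rcases ha with ha | ha
    · have h0 : φ a = 0 := hφP ha
      simp [hg₁def, hg₂def, h0]
    · have h1 : φ a = 1 := hφQ ha
      simp only [hg₁def, hg₂def, h1, mul_one]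
      rw [Complex.ofReal_neg, neg_mul, Complex.exp_neg, Complex.exp_pi_mul_I]
      norm_num
  set f : E → ℂ := (closure U).piecewise g₁ g₂ with hfdef
  have hfc : Continuous f := by
    apply Continuous.piecewise _ hg₁c hg₂c
    intro a ha
    exact hg12 a (frontier_closure_subset ha)
  have habsf : ∀ x, ‖f x‖ = 1 := by
    intro x
    by_cases hx : x ∈ closure U
    · rw [hfdef, Set.piecewise_eq_of_mem _ _ _ hx, hg₁def]
      exact Complex.norm_exp_ofReal_mul_I _
    · rw [hfdef, Set.piecewise_eq_of_notMem _ _ _ hx, hg₂def]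
      exact Complex.norm_exp_ofReal_mul_I _
  obtain ⟨w, hwc, hwe⟩ := exists_circle_lift f hfc habsf
  have hfA : ∀ x ∈ closure U, f x = g₁ x := fun x hx => Set.piecewise_eq_of_mem _ _ _ hx
  have hfB : ∀ x ∈ Uᶜ, f x = g₂ x := by
    intro x hx
    by_cases hxc : x ∈ closure U
    · have hxf : x ∈ frontier U := by
        rw [hU.frontier_eq]
        exact ⟨hxc, hx⟩
      rw [hfA x hxc, hg12 x hxf]
    · exact Set.piecewise_eq_of_notMem _ _ _ hxc
  -- frontier is in both closure U and Uᶜ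
  have hfrA : frontier U ⊆ closure U := frontier_subset_closure
  have hfrB : frontier U ⊆ Uᶜ := by
    rw [hU.frontier_eq]
    exact fun x hx => hx.2
  have hApre : IsPreconnected (closure U) := hconn.closure
  -- integer-valued functions
  set dA : E → ℝ := fun x => (w x - Real.pi * φ x) / (2 * Real.pi) with hdAdef
  set dB : E → ℝ := fun x => (w x + Real.pi * φ x) / (2 * Real.pi) with hdBdef
  have hintA : ∀ x ∈ closure U, ∃ m : ℤ, dA x = m := by
    intro x hx
    have hone : Complex.exp (((w x - Real.pi * φ x : ℝ) : ℂ) * I) = 1 := by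
      rw [Complex.ofReal_sub, sub_mul, Complex.exp_sub, hwe x, hfA x hx, hg₁def]
      exact div_self (Complex.exp_ne_zero _)
    obtain ⟨m, hm⟩ := exp_eq_one_int hone
    refine ⟨m, ?_⟩
    simp only [hdAdef]
    rw [hm]
    field_simp
  have hintB : ∀ x ∈ Uᶜ, ∃ m : ℤ, dB x = m := by
    intro x hx
    have hone : Complex.exp (((w x + Real.pi * φ x : ℝ) : ℂ) * I) = 1 := by
      rw [Complex.ofReal_add, add_mul, Complex.exp_add, hwe x, hfB x hx, hg₂def]
      simp only
      rw [← Complex.exp_add, Complex.ofReal_neg]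
      ring_nf
      exact Complex.exp_zero
    obtain ⟨m, hm⟩ := exp_eq_one_int hone
    refine ⟨m, ?_⟩
    simp only [hdBdef]
    rw [hm]
    field_simp
  have hcontA : ContinuousOn dA (closure U) :=
    ((hwc.continuousOn).sub (continuous_const.mul φ.continuous).continuousOn).div_const _
  have hcontB : ContinuousOn dB (Uᶜ) :=
    ((hwc.continuousOn).add (continuous_const.mul φ.continuous).continuousOn).div_const _
  obtain ⟨p, hp⟩ := hPne
  obtain ⟨q, hq⟩ := hQne
  have hpf : p ∈ frontier U := hp.1
  have hqf : q ∈ frontier U := hq.1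
  have hφp : φ p = 0 := hφP hp
  have hφq : φ q = 1 := hφQ hq
  have hA := int_valued_const hApre hcontA hintA (hfrA hpf) (hfrA hqf)
  have hB := int_valued_const hconn' hcontB hintB (hfrB hpf) (hfrB hqf)
  simp only [hdAdef, hdBdef, hφp, hφq, mul_zero, mul_one, sub_zero, add_zero] at hA hB
  have h2pi : (2 * Real.pi) ≠ 0 := by positivity
  have hA' : w p = w q - Real.pi := by
    field_simp at hA
    linarith
  have hB' : w p = w q + Real.pi := by
    field_simp at hB
    linarith
  have := Real.pi_pos
  linarith
end
end

section
/- Expected reciprocal of the exposed interval length (the identity E[X^{−1}] = 2/λ asserted between Propositions 2.5 and 2.6, deduced from the distribution (Xdist)): Let ν be a probability measure on (0,∞) with mean λ := ∫_{(0,∞)} u ν(du) satisfying 0 < λ < ∞. Then ∫_0^∞ ( ∫_{(x,∞)} ( 2(λ+u) / (λ+x)³ ) ν(du) ) dx + ∫_{(0,∞)} ( 1 / (x+λ) ) ν(dx) = 2/λ. (The left-hand side is ∫ x^{−1} P[X ∈ dx] where P[X ∈ dx] = ( ∫_{(x,∞)} 2x(λ+u)/(λ+x)³ ν(du) ) dx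 + (x/(x+λ)) ν(dx) is the distribution of the length X of the visible interval covering the origin in the one-dimensional dead leaves model with leaf-length distribution ν.) -/
open MeasureTheory Set

noncomputable section

/-- Expected reciprocal of the exposed interval length in the one-dimensional
dead leaves model: if `ν` is a probability measure on `(0,∞)` with finite
positive mean `λ`, then
`∫_0^∞ ( ∫_{(x,∞)} 2(λ+u)/(λ+x)³ ν(du) ) dx + ∫_{(0,∞)} 1/(x+λ) ν(dx) = 2/λ`,
i.e. `E[X⁻¹] = 2/λ` where `X` has the exposed-interval-length distribution. -/
theorem expected_reciprocal_exposed_length (ν : Measure ℝ) [IsProbabilityMeasure ν]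
    (hsupp : ν (Set.Iic 0) = 0) (hInt : Integrable (fun u : ℝ => u) ν)
    (lam : ℝ) (hlam : lam = ∫ u, u ∂ν) (hpos : 0 < lam) :
    (∫⁻ x in Set.Ioi (0 : ℝ),
        ∫⁻ u in Set.Ioi x, ENNReal.ofReal (2 * (lam + u) / (lam + x) ^ 3) ∂ν)
      + (∫⁻ x in Set.Ioi (0 : ℝ), ENNReal.ofReal (1 / (x + lam)) ∂ν)
      = ENNReal.ofReal (2 / lam) := by
  have hlam0 : lam ≠ 0 := ne_of_gt hpos
  have hνmem : ∀ᵐ u ∂ν, u ∈ Ioi (0 : ℝ) := by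
    rw [ae_iff]
    convert hsupp using 2
    ext u; simp [Ioi, not_lt]
  have hν : ν.restrict (Ioi 0) = ν := Measure.restrict_eq_self_of_ae_mem hνmem
  -- inner integral computation
  have hinner : ∀ u : ℝ, 0 < u →
      (∫⁻ x in Ioo (0 : ℝ) u, ENNReal.ofReal (2 * (lam + u) / (lam + x) ^ 3))
        = ENNReal.ofReal ((lam + u) / lam ^ 2 - 1 / (lam + u)) := by
    intro u hu
    have hlu : lam + u ≠ 0 := by positivity
    have hderiv : ∀ x ∈ uIcc (0 : ℝ) u,
        HasDerivAt (fun x => -((lam + u) / (lam + x) ^ 2))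
          (2 * (lam + u) / (lam + x) ^ 3) x := by
      intro x hx
      rw [uIcc_of_le hu.le] at hx
      have hlx : (0:ℝ) < lam + x := by linarith [hx.1]
      have h1 : HasDerivAt (fun x : ℝ => (lam + x) ^ 2) (2 * (lam + x)) x := by
        have := ((hasDerivAt_id x).const_add lam).pow 2
        exact this.congr_deriv (by simp)
      have h2 : HasDerivAt (fun x => (lam + u) / (lam + x) ^ 2)
          ((0 * (lam + x)^2 - (lam + u) * (2 * (lam + x))) / ((lam + x) ^ 2) ^ 2) x :=
        (hasDerivAt_const x (lam + u)).div h1 (by positivity)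
      have := h2.neg
      refine this.congr_deriv ?_
      field_simp
      ring
    have hintg : IntervalIntegrable (fun x => 2 * (lam + u) / (lam + x) ^ 3) volume 0 u := by
      apply ContinuousOn.intervalIntegrable
      apply ContinuousOn.div continuousOn_const (by fun_prop)
      intro x hx
      rw [uIcc_of_le hu.le] at hx
      have hlx : (0:ℝ) < lam + x := by linarith [hx.1]
      positivity
    have hFTC := intervalIntegral.integral_eq_sub_of_hasDerivAt hderiv hintg
    rw [intervalIntegral.integral_of_le hu.le, integral_Ioc_eq_integral_Ioo] at hFTC
    have hnn : 0 ≤ᶠ[ae (volume.restrict (Ioo (0:ℝ) u))]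
        fun x => 2 * (lam + u) / (lam + x) ^ 3 := by
      filter_upwards [ae_restrict_mem measurableSet_Ioo] with x hx
      have hlx : (0:ℝ) < lam + x := by linarith [hx.1]
      positivity
    have hintg' : Integrable (fun x => 2 * (lam + u) / (lam + x) ^ 3)
        (volume.restrict (Ioo (0:ℝ) u)) := by
      have := hintg.1
      rwa [intervalIntegrable_iff_integrableOn_Ioo_of_le hu.le] at hintg
    rw [← ofReal_integral_eq_lintegral_ofReal hintg' hnn, hFTC]
    congr 1
    field_simp
    ring
  -- Tonelli swap
  have hmeas : Measurable (fun p : ℝ × ℝ =>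
      {q : ℝ × ℝ | q.1 < q.2}.indicator
        (fun q => ENNReal.ofReal (2 * (lam + q.2) / (lam + q.1) ^ 3)) p) := by
    refine Measurable.indicator ?_ (measurableSet_lt measurable_fst measurable_snd)
    apply Measurable.ennreal_ofReal
    fun_prop
  have hswap :
      (∫⁻ x in Ioi (0 : ℝ),
          ∫⁻ u in Ioi x, ENNReal.ofReal (2 * (lam + u) / (lam + x) ^ 3) ∂ν)
        = ∫⁻ u in Ioi (0:ℝ), ENNReal.ofReal ((lam + u) / lam ^ 2 - 1 / (lam + u)) ∂ν := by
    have step1 : (∫⁻ x in Ioi (0 : ℝ),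
          ∫⁻ u in Ioi x, ENNReal.ofReal (2 * (lam + u) / (lam + x) ^ 3) ∂ν)
        = ∫⁻ x in Ioi (0:ℝ), ∫⁻ u, {q : ℝ × ℝ | q.1 < q.2}.indicator
            (fun q => ENNReal.ofReal (2 * (lam + q.2) / (lam + q.1) ^ 3)) (x, u) ∂ν := by
      refine lintegral_congr fun x => ?_
      rw [← lintegral_indicator measurableSet_Ioi]
      refine lintegral_congr fun u => ?_
      by_cases h : x < u <;> simp [Set.indicator, h, Ioi]
    rw [step1]
    rw [lintegral_lintegral_swap hmeas.aemeasurable]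
    conv_lhs => rw [← hν]
    refine lintegral_congr_ae ?_
    filter_upwards [ae_restrict_mem measurableSet_Ioi] with u hu
    have : (∫⁻ x in Ioi (0:ℝ), {q : ℝ × ℝ | q.1 < q.2}.indicator
            (fun q => ENNReal.ofReal (2 * (lam + q.2) / (lam + q.1) ^ 3)) (x, u))
        = ∫⁻ x in Ioo (0:ℝ) u, ENNReal.ofReal (2 * (lam + u) / (lam + x) ^ 3) := by
      have heq : ∀ x : ℝ, {q : ℝ × ℝ | q.1 < q.2}.indicator
            (fun q => ENNReal.ofReal (2 * (lam + q.2) / (lam + q.1) ^ 3)) (x, u)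
          = (Iio u).indicator (fun x => ENNReal.ofReal (2 * (lam + u) / (lam + x) ^ 3)) x := by
        intro x
        by_cases h : x < u <;> simp [Set.indicator, h, Iio]
      simp_rw [heq]
      rw [lintegral_indicator measurableSet_Iio, Measure.restrict_restrict measurableSet_Iio]
      congr 1
      rw [Set.inter_comm, Ioi_inter_Iio]
    rw [this, hinner u hu]
  rw [hswap]
  -- combine the two terms
  have hcomb : (∫⁻ u in Ioi (0:ℝ), ENNReal.ofReal ((lam + u) / lam ^ 2 - 1 / (lam + u)) ∂ν)
      + (∫⁻ x in Ioi (0:ℝ), ENNReal.ofReal (1 / (x + lam)) ∂ν)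
      = ∫⁻ u in Ioi (0:ℝ), ENNReal.ofReal ((lam + u) / lam ^ 2) ∂ν := by
    rw [← lintegral_add_left (by fun_prop)]
    refine lintegral_congr_ae ?_
    filter_upwards [ae_restrict_mem measurableSet_Ioi] with u hu
    have hu0 : (0:ℝ) < u := hu
    have hlu : (0:ℝ) < lam + u := by linarith
    have h1 : (0:ℝ) ≤ 1 / (u + lam) := by positivity
    have h2 : (0:ℝ) ≤ (lam + u) / lam ^ 2 - 1 / (lam + u) := by
      rw [sub_nonneg, div_le_div_iff₀ hlu (by positivity)]
      nlinarith
    rw [← ENNReal.ofReal_add h2 h1]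
    congr 1
    field_simp
    ring
  rw [hcomb]
  rw [hν]
  have hint2 : Integrable (fun u : ℝ => (lam + u) / lam ^ 2) ν :=
    ((integrable_const lam).add hInt).div_const _
  have hnn2 : 0 ≤ᶠ[ae ν] fun u : ℝ => (lam + u) / lam ^ 2 := by
    filter_upwards [hνmem] with u hu
    have hu0 : (0:ℝ) < u := hu
    positivity
  rw [← ofReal_integral_eq_lintegral_ofReal hint2 hnn2]
  congr 1
  rw [integral_div, integral_add (integrable_const lam) hInt, integral_const]
  simp only [measure_univ, ENNReal.toReal_one, probReal_univ, one_smul, ← hlam]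
  field_simp
  ring
end
end
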